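/- arXiv:0804.1758 — 7 statements merged into one kernel-verified Lean document; each statement's English description precedes it below -/
import Mathlib

section
/- The relation ⊑ on nonempty subsets of a lattice L, defined by Y₁ ⊑ Y₂ iff for all y₁ ∈ Y₁ and y₂ ∈ Y₂, y₁ ∧ y₂ ∈ Y₁ and y₁ ∨ y₂ ∈ Y₂, is transitive and antisymmetric. -/
/-- The Topkis relation `⊑` on subsets of a lattice. -/
def topkis {L : Type*} [Lattice L] (Y₁ Y₂ : Set L) : Prop :=
  ∀ y₁ ∈ Y₁, ∀ y₂ ∈ Y₂, y₁ ⊓ y₂ ∈ Y₁ ∧ y₁ ⊔ y₂ ∈ Y₂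

theorem topkis_trans_antisymm {L : Type*} [Lattice L] :
    (∀ Y₁ Y₂ Y₃ : Set L, Y₁.Nonempty → Y₂.Nonempty → Y₃.Nonempty →
      topkis Y₁ Y₂ → topkis Y₂ Y₃ → topkis Y₁ Y₃) ∧
    (∀ Y₁ Y₂ : Set L, Y₁.Nonempty → Y₂.Nonempty →
      topkis Y₁ Y₂ → topkis Y₂ Y₁ → Y₁ = Y₂) := by
  constructor
  · intro Y₁ Y₂ Y₃ _ h2 _ h12 h23 y₁ hy₁ y₃ hy₃
    obtain ⟨y₂, hy₂⟩ := h2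
    have hj : y₁ ⊔ y₂ ∈ Y₂ := (h12 y₁ hy₁ y₂ hy₂).2
    have hz : (y₁ ⊔ y₂) ⊓ y₃ ∈ Y₂ := (h23 _ hj y₃ hy₃).1
    constructor
    · have := (h12 y₁ hy₁ _ hz).1
      have heq : y₁ ⊓ ((y₁ ⊔ y₂) ⊓ y₃) = y₁ ⊓ y₃ := by
        rw [← inf_assoc, inf_sup_self]
      rwa [heq] at this
    · have hm : y₂ ⊓ y₃ ∈ Y₂ := (h23 y₂ hy₂ y₃ hy₃).1
      have hw : y₁ ⊔ (y₂ ⊓ y₃) ∈ Y₂ := (h12 y₁ hy₁ _ hm).2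
      have := (h23 _ hw y₃ hy₃).2
      have heq : y₁ ⊔ (y₂ ⊓ y₃) ⊔ y₃ = y₁ ⊔ y₃ := by
        rw [sup_assoc]; simp
      rwa [heq] at this
  · intro Y₁ Y₂ h1 h2 h12 h21
    ext x
    constructor
    · intro hx
      obtain ⟨y₂, hy₂⟩ := h2
      have hj : x ⊔ y₂ ∈ Y₂ := (h12 x hx y₂ hy₂).2
      have := (h21 _ hj x hx).1
      rwa [inf_comm, inf_sup_self] at this
    · intro hx
      obtain ⟨y₁, hy₁⟩ := h1
      have hj : y₁ ⊓ x ∈ Y₁ := (h12 y₁ hy₁ x hx).1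
      have := (h21 x hx _ hj).2
      simpa using this
end

section
/- If L is a linearly ordered lattice and I₁, I₂ are nonempty preference intervals of L, then the set J := { a₁ ∨ a₂ | a₁ ∈ I₁, a₂ ∈ I₂ } is a nonempty preference interval and is the least upper bound of I₁ and I₂ with respect to the order ⊑. -/
lemma sup_mem_of_mem {L : Type*} [LinearOrder L] {S : Set L} {a b : L}
    (ha : a ∈ S) (hb : b ∈ S) : a ⊔ b ∈ S := by
  rcases le_total a b with h | h
  · rwa [sup_eq_right.mpr h]
  · rwa [sup_eq_left.mpr h]

lemma inf_mem_of_mem {L : Type*} [LinearOrder L] {S : Set L} {a b : L}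
    (ha : a ∈ S) (hb : b ∈ S) : a ⊓ b ∈ S := by
  rcases le_total a b with h | h
  · rwa [inf_eq_left.mpr h]
  · rwa [inf_eq_right.mpr h]

theorem join_of_intervals_is_lub {L : Type*} [LinearOrder L] (I₁ I₂ : Set L)
    (h₁ : I₁.Nonempty) (h₂ : I₂.Nonempty)
    (c₁ : I₁.OrdConnected) (c₂ : I₂.OrdConnected) :
    (({z | ∃ a₁ ∈ I₁, ∃ a₂ ∈ I₂, z = a₁ ⊔ a₂} : Set L)).Nonempty ∧
    ({z | ∃ a₁ ∈ I₁, ∃ a₂ ∈ I₂, z = a₁ ⊔ a₂} : Set L).OrdConnected ∧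
    topkis I₁ {z | ∃ a₁ ∈ I₁, ∃ a₂ ∈ I₂, z = a₁ ⊔ a₂} ∧
    topkis I₂ {z | ∃ a₁ ∈ I₁, ∃ a₂ ∈ I₂, z = a₁ ⊔ a₂} ∧
    ∀ K : Set L, K.Nonempty → K.OrdConnected → topkis I₁ K → topkis I₂ K →
      topkis {z | ∃ a₁ ∈ I₁, ∃ a₂ ∈ I₂, z = a₁ ⊔ a₂} K := by
  obtain ⟨x₁, hx₁⟩ := h₁
  obtain ⟨x₂, hx₂⟩ := h₂
  refine ⟨⟨x₁ ⊔ x₂, x₁, hx₁, x₂, hx₂, rfl⟩, ?_, ?_, ?_, ?_⟩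
  · constructor
    rintro z ⟨a₁, ha₁, a₂, ha₂, rfl⟩ w ⟨b₁, hb₁, b₂, hb₂, rfl⟩ x ⟨hxl, hxr⟩
    refine ⟨a₁ ⊔ (x ⊓ b₁), ?_, a₂ ⊔ (x ⊓ b₂), ?_, ?_⟩
    · exact c₁.out ha₁ (sup_mem_of_mem ha₁ hb₁)
        ⟨le_sup_left, sup_le_sup le_rfl inf_le_right⟩
    · exact c₂.out ha₂ (sup_mem_of_mem ha₂ hb₂)
        ⟨le_sup_left, sup_le_sup le_rfl inf_le_right⟩
    · have : a₁ ⊔ x ⊓ b₁ ⊔ (a₂ ⊔ x ⊓ b₂) = (a₁ ⊔ a₂) ⊔ (x ⊓ (b₁ ⊔ b₂)) := by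
        rw [inf_sup_left]
        ac_rfl
      rw [this, inf_eq_left.mpr hxr, sup_eq_right.mpr hxl]
  · rintro y₁ hy₁ y ⟨a₁, ha₁, a₂, ha₂, rfl⟩
    constructor
    · exact c₁.out (inf_mem_of_mem hy₁ ha₁) hy₁
        ⟨inf_le_inf le_rfl le_sup_left, inf_le_left⟩
    · exact ⟨y₁ ⊔ a₁, sup_mem_of_mem hy₁ ha₁, a₂, ha₂, (sup_assoc ..).symm⟩
  · rintro y₂ hy₂ y ⟨a₁, ha₁, a₂, ha₂, rfl⟩
    constructor
    · exact c₂.out (inf_mem_of_mem hy₂ ha₂) hy₂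
        ⟨inf_le_inf le_rfl le_sup_right, inf_le_left⟩
    · refine ⟨a₁, ha₁, y₂ ⊔ a₂, sup_mem_of_mem hy₂ ha₂, ?_⟩
      ac_rfl
  · rintro K hK hKc hK₁ hK₂
    rintro y ⟨a₁, ha₁, a₂, ha₂, rfl⟩ k hk
    constructor
    · refine ⟨a₁ ⊓ k, (hK₁ a₁ ha₁ k hk).1, a₂ ⊓ k, (hK₂ a₂ ha₂ k hk).1, ?_⟩
      rw [inf_sup_right]
    · have : a₁ ⊔ a₂ ⊔ k = (a₁ ⊔ k) ⊔ (a₂ ⊔ k) := by ac_rfl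
      rw [this]
      exact sup_mem_of_mem (hK₁ a₁ ha₁ k hk).2 (hK₂ a₂ ha₂ k hk).2
end

section
/- For a linearly ordered lattice L, the set I_L of nonempty preference intervals of L, ordered by ⊑, forms a lattice containing L as the sublattice of singletons, with join [a₁,b₁] ⊔ [a₂,b₂] = [a₁∨a₂, b₁∨b₂] and meet [a₁,b₁] ⊓ [a₂,b₂] = [a₁∧a₂, b₁∧b₂] on closed intervals. -/
/-- The set of nonempty preference intervals of `L`. -/
def IL (L : Type*) [Lattice L] := {I : Set L // I.Nonempty ∧ I.OrdConnected}

/-- The closed interval `[a,b]` (with `a ≤ b`) as a nonempty preference interval. -/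
def mkIcc {L : Type*} [Lattice L] {a b : L} (h : a ≤ b) : IL L :=
  ⟨Set.Icc a b, Set.nonempty_Icc.mpr h, Set.ordConnected_Icc⟩

/-- The singleton `{a}` as a nonempty preference interval. -/
def mkSingle {L : Type*} [Lattice L] (a : L) : IL L :=
  ⟨{a}, Set.singleton_nonempty a, Set.ordConnected_singleton⟩

/-- `≤`, `⊔`, `⊓` of an explicitly given lattice structure. -/
def lle {α : Type*} (inst : Lattice α) (x y : α) : Prop := letI := inst; x ≤ y
def lsup {α : Type*} (inst : Lattice α) (x y : α) : α := letI := inst; x ⊔ y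
def linf {α : Type*} (inst : Lattice α) (x y : α) : α := letI := inst; x ⊓ y

section Aux
variable {L : Type*} [LinearOrder L]

lemma inf_mem_pair (a b : L) : a ⊓ b = a ∨ a ⊓ b = b :=
  (le_total a b).imp inf_eq_left.2 inf_eq_right.2

lemma sup_mem_pair (a b : L) : a ⊔ b = a ∨ a ⊔ b = b :=
  (le_total b a).imp sup_eq_left.2 sup_eq_right.2

lemma sup_oc {I J : Set L} (hI : I.OrdConnected) (hJ : J.OrdConnected) :
    (Set.image2 (· ⊔ ·) I J).OrdConnected := by
  constructor
  rintro _ ⟨x1, hx1, y1, hy1, rfl⟩ _ ⟨x2, hx2, y2, hy2, rfl⟩ z ⟨hz1, hz2⟩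
  have key : z ≤ x2 ∨ z ≤ y2 := by
    rcases le_total x2 y2 with h' | h'
    · right; simpa [sup_eq_right.2 h'] using hz2
    · left; simpa [sup_eq_left.2 h'] using hz2
  rcases key with h | h
  · exact ⟨z, hI.out hx1 hx2 ⟨le_sup_left.trans hz1, h⟩, y1, hy1,
      sup_eq_left.2 (le_sup_right.trans hz1)⟩
  · exact ⟨x1, hx1, z, hJ.out hy1 hy2 ⟨le_sup_right.trans hz1, h⟩,
      sup_eq_right.2 (le_sup_left.trans hz1)⟩

lemma inf_oc {I J : Set L} (hI : I.OrdConnected) (hJ : J.OrdConnected) :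
    (Set.image2 (· ⊓ ·) I J).OrdConnected := by
  constructor
  rintro _ ⟨x1, hx1, y1, hy1, rfl⟩ _ ⟨x2, hx2, y2, hy2, rfl⟩ z ⟨hz1, hz2⟩
  have key : x1 ≤ z ∨ y1 ≤ z := by
    rcases le_total x1 y1 with h' | h'
    · left; simpa [inf_eq_left.2 h'] using hz1
    · right; simpa [inf_eq_right.2 h'] using hz1
  rcases key with h | h
  · exact ⟨z, hI.out hx1 hx2 ⟨h, hz2.trans inf_le_left⟩, y2, hy2,
      inf_eq_left.2 (hz2.trans inf_le_right)⟩
  · exact ⟨x2, hx2, z, hJ.out hy1 hy2 ⟨h, hz2.trans inf_le_right⟩,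
      inf_eq_right.2 (hz2.trans inf_le_left)⟩

lemma topkis_subset {I J : Set L} (hJ : J.Nonempty) (h1 : topkis I J) (h2 : topkis J I) :
    I ⊆ J := fun x hx => by
  obtain ⟨y, hy⟩ := hJ
  rcases le_total x y with h | h
  · have := (h2 y hy x hx).1
    rwa [inf_eq_right.2 h] at this
  · have := (h1 x hx y hy).2
    rwa [sup_eq_left.2 h] at this

def ILlat : Lattice (IL L) where
  le I J := topkis I.1 J.1
  le_refl I := fun y1 h1 y2 h2 => by
    constructor
    · rcases inf_mem_pair y1 y2 with h | h <;> rw [h] <;> assumption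
    · rcases sup_mem_pair y1 y2 with h | h <;> rw [h] <;> assumption
  le_trans I J K hIJ hJK x hx z hz := by
    obtain ⟨y, hy⟩ := J.2.1
    constructor
    · rcases le_total x z with h | h
      · rwa [inf_eq_left.2 h]
      · rw [inf_eq_right.2 h]
        rcases le_total y z with h' | h'
        · have hyI : y ∈ I.1 := by
            have := (hIJ x hx y hy).1; rwa [inf_eq_right.2 (h'.trans h)] at this
          exact I.2.2.out hyI hx ⟨h', h⟩
        · have hzJ : z ∈ J.1 := by
            have := (hJK y hy z hz).1; rwa [inf_eq_right.2 h'] at this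
          have := (hIJ x hx z hzJ).1; rwa [inf_eq_right.2 h] at this
    · rcases le_total x z with h | h
      · rw [sup_eq_right.2 h]; exact hz
      · rw [sup_eq_left.2 h]
        rcases le_total x y with h' | h'
        · have hyK : y ∈ K.1 := by
            have := (hJK y hy z hz).2; rwa [sup_eq_left.2 (h.trans h')] at this
          exact K.2.2.out hz hyK ⟨h, h'⟩
        · have hxJ : x ∈ J.1 := by
            have := (hIJ x hx y hy).2; rwa [sup_eq_left.2 h'] at this
          have := (hJK x hxJ z hz).2; rwa [sup_eq_left.2 h] at this
  le_antisymm I J h1 h2 := Subtype.ext <|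
    Set.Subset.antisymm (topkis_subset J.2.1 h1 h2) (topkis_subset I.2.1 h2 h1)
  sup I J := ⟨Set.image2 (· ⊔ ·) I.1 J.1, I.2.1.image2 J.2.1, sup_oc I.2.2 J.2.2⟩
  le_sup_left I J x hx := by
    rintro _ ⟨a, ha, b, hb, rfl⟩
    constructor
    · rcases le_total x (a ⊔ b) with h | h
      · rwa [inf_eq_left.2 h]
      · rw [inf_eq_right.2 h]
        exact I.2.2.out ha hx ⟨le_sup_left, h⟩
    · refine ⟨x ⊔ a, ?_, b, hb, by show (x ⊔ a) ⊔ b = _; rw [sup_assoc]⟩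
      rcases sup_mem_pair x a with h | h <;> rw [h] <;> assumption
  le_sup_right I J y hy := by
    rintro _ ⟨a, ha, b, hb, rfl⟩
    constructor
    · rcases le_total y (a ⊔ b) with h | h
      · rwa [inf_eq_left.2 h]
      · rw [inf_eq_right.2 h]
        exact J.2.2.out hb hy ⟨le_sup_right, h⟩
    · refine ⟨a, ha, b ⊔ y, ?_, by show a ⊔ (b ⊔ y) = _; rw [sup_comm y, sup_assoc]⟩
      rcases sup_mem_pair b y with h | h <;> rw [h] <;> assumption
  sup_le I J K hIK hJK := by
    rintro _ ⟨a, ha, b, hb, rfl⟩ k hk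
    constructor
    · rw [inf_sup_right]
      exact ⟨a ⊓ k, (hIK a ha k hk).1, b ⊓ k, (hJK b hb k hk).1, rfl⟩
    · rw [sup_assoc]
      exact (hIK a ha _ (hJK b hb k hk).2).2
  inf I J := ⟨Set.image2 (· ⊓ ·) I.1 J.1, I.2.1.image2 J.2.1, inf_oc I.2.2 J.2.2⟩
  inf_le_left I J := by
    rintro _ ⟨a, ha, b, hb, rfl⟩ x hx
    constructor
    · refine ⟨a ⊓ x, ?_, b, hb, by show (a ⊓ x) ⊓ b = _; rw [inf_assoc, inf_comm x b, ← inf_assoc]⟩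
      rcases inf_mem_pair a x with h | h <;> rw [h] <;> assumption
    · rcases le_total x (a ⊓ b) with h | h
      · rw [sup_eq_left.2 h]
        exact I.2.2.out hx ha ⟨h, inf_le_left⟩
      · rwa [sup_eq_right.2 h]
  inf_le_right I J := by
    rintro _ ⟨a, ha, b, hb, rfl⟩ y hy
    constructor
    · refine ⟨a, ha, b ⊓ y, ?_, by show a ⊓ (b ⊓ y) = _; rw [inf_assoc]⟩
      rcases inf_mem_pair b y with h | h <;> rw [h] <;> assumption
    · rcases le_total y (a ⊓ b) with h | h
      · rw [sup_eq_left.2 h]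
        exact J.2.2.out hy hb ⟨h, inf_le_right⟩
      · rwa [sup_eq_right.2 h]
  le_inf K I J hKI hKJ := by
    rintro k hk _ ⟨a, ha, b, hb, rfl⟩
    constructor
    · rw [← inf_assoc]
      exact (hKJ _ (hKI k hk a ha).1 b hb).1
    · rw [sup_inf_left]
      exact ⟨k ⊔ a, (hKI k hk a ha).2, k ⊔ b, (hKJ k hk b hb).2, rfl⟩

lemma image2_sup_Icc {a₁ b₁ a₂ b₂ : L} (h₁ : a₁ ≤ b₁) (h₂ : a₂ ≤ b₂) :
    Set.image2 (· ⊔ ·) (Set.Icc a₁ b₁) (Set.Icc a₂ b₂) = Set.Icc (a₁ ⊔ a₂) (b₁ ⊔ b₂) := by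
  ext z
  constructor
  · rintro ⟨x, ⟨hx1, hx2⟩, y, ⟨hy1, hy2⟩, rfl⟩
    exact ⟨sup_le_sup hx1 hy1, sup_le_sup hx2 hy2⟩
  · rintro ⟨hz1, hz2⟩
    refine ⟨a₁ ⊔ z ⊓ b₁, ⟨le_sup_left, sup_le h₁ inf_le_right⟩,
      a₂ ⊔ z ⊓ b₂, ⟨le_sup_left, sup_le h₂ inf_le_right⟩, ?_⟩
    dsimp only
    rw [sup_sup_sup_comm, ← inf_sup_left, inf_eq_left.2 hz2, sup_eq_right.2 hz1]
lemma image2_inf_Icc {a₁ b₁ a₂ b₂ : L} (h₁ : a₁ ≤ b₁) (h₂ : a₂ ≤ b₂) :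
    Set.image2 (· ⊓ ·) (Set.Icc a₁ b₁) (Set.Icc a₂ b₂) = Set.Icc (a₁ ⊓ a₂) (b₁ ⊓ b₂) := by
  ext z
  constructor
  · rintro ⟨x, ⟨hx1, hx2⟩, y, ⟨hy1, hy2⟩, rfl⟩
    exact ⟨inf_le_inf hx1 hy1, inf_le_inf hx2 hy2⟩
  · rintro ⟨hz1, hz2⟩
    refine ⟨b₁ ⊓ (z ⊔ a₁), ⟨le_inf h₁ le_sup_right, inf_le_left⟩,
      b₂ ⊓ (z ⊔ a₂), ⟨le_inf h₂ le_sup_right, inf_le_left⟩, ?_⟩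
    dsimp only
    rw [inf_inf_inf_comm, ← sup_inf_left, sup_eq_left.2 hz1, inf_eq_right.2 hz2]

end Aux

theorem IL_lattice {L : Type*} [LinearOrder L] :
    ∃ inst : Lattice (IL L),
      (∀ I J : IL L, lle inst I J ↔ topkis I.1 J.1) ∧
      (∀ (a₁ b₁ a₂ b₂ : L) (h₁ : a₁ ≤ b₁) (h₂ : a₂ ≤ b₂),
        (lsup inst (mkIcc h₁) (mkIcc h₂)).1 = Set.Icc (a₁ ⊔ a₂) (b₁ ⊔ b₂) ∧
        (linf inst (mkIcc h₁) (mkIcc h₂)).1 = Set.Icc (a₁ ⊓ a₂) (b₁ ⊓ b₂)) ∧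
      (∀ a b : L,
        lsup inst (mkSingle a) (mkSingle b) = mkSingle (a ⊔ b) ∧
        linf inst (mkSingle a) (mkSingle b) = mkSingle (a ⊓ b)) := by
  refine ⟨ILlat, fun I J => Iff.rfl, fun a₁ b₁ a₂ b₂ h₁ h₂ =>
    ⟨image2_sup_Icc h₁ h₂, image2_inf_Icc h₁ h₂⟩, fun a b =>
    ⟨Subtype.ext (Set.image2_singleton), Subtype.ext (Set.image2_singleton)⟩⟩
end

section
/- Let M be an ordered set, L a linearly ordered lattice, and φ a correspondence from M to nonempty preference intervals of L. Then φ is increasing (i.e., whenever (x₁,y₂), (x₂,y₁) are in the graph of φ with x₁ ≤ x₂ and y₁ ≤ y₂, the whole rectangle [x₁,x₂]×[y₁,y₂] lies in the graph) if and only if x₁ ≤ x₂ implies φ(x₁) ⊑ φ(x₂). -/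
theorem increasing_iff_topkis_monotone {M L : Type*} [PartialOrder M] [LinearOrder L]
    (φ : M → Set L) (hne : ∀ x, (φ x).Nonempty) (hconn : ∀ x, (φ x).OrdConnected) :
    (∀ x₁ x₂ y₁ y₂ : _, x₁ ≤ x₂ → y₁ ≤ y₂ → y₂ ∈ φ x₁ → y₁ ∈ φ x₂ →
        ∀ x ∈ Set.Icc x₁ x₂, ∀ y ∈ Set.Icc y₁ y₂, y ∈ φ x) ↔
    (∀ x₁ x₂ : M, x₁ ≤ x₂ → topkis (φ x₁) (φ x₂)) := by
  constructor
  · intro h x₁ x₂ hx y₁ hy₁ y₂ hy₂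
    rcases le_total y₁ y₂ with hle | hle
    · simpa [inf_eq_left.2 hle, sup_eq_right.2 hle] using ⟨hy₁, hy₂⟩
    · have := h x₁ x₂ y₂ y₁ hx hle hy₁ hy₂
      constructor
      · simpa [inf_eq_right.2 hle] using this x₁ ⟨le_refl _, hx⟩ y₂ ⟨le_refl _, hle⟩
      · simpa [sup_eq_left.2 hle] using this x₂ ⟨hx, le_refl _⟩ y₁ ⟨hle, le_refl _⟩
  · intro h x₁ x₂ y₁ y₂ hx hy hy₂ hy₁ x ⟨hx1, hx2⟩ y hy'
    obtain ⟨z, hz⟩ := hne x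
    have h1 : y₂ ⊔ z ∈ φ x := (h x₁ x hx1 y₂ hy₂ z hz).2
    have hy1x : y₁ ∈ φ x := by
      have := (h x x₂ hx2 (y₂ ⊔ z) h1 y₁ hy₁).1
      rwa [inf_eq_right.2 (hy.trans le_sup_left)] at this
    have h2 : z ⊓ y₁ ∈ φ x := (h x x₂ hx2 z hz y₁ hy₁).1
    have hy2x : y₂ ∈ φ x := by
      have := (h x₁ x hx1 y₂ hy₂ (z ⊓ y₁) h2).2
      rwa [sup_eq_left.2 (inf_le_right.trans hy)] at this
    exact (hconn x).out hy1x hy2x hy'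
end

section
/- In a linearly ordered lattice L, for nonempty preference intervals I₁, I₂: I₁ ⊑ I₂ holds if and only if for each a₁ ∈ I₁ there exists a₂ ∈ I₂ with a₁ ≤ a₂, and for each b₂ ∈ I₂ there exists b₁ ∈ I₁ with b₁ ≤ b₂. -/
theorem topkis_iff_exists_le {L : Type*} [LinearOrder L] (I₁ I₂ : Set L)
    (h₁ : I₁.Nonempty) (h₂ : I₂.Nonempty)
    (c₁ : I₁.OrdConnected) (c₂ : I₂.OrdConnected) :
    topkis I₁ I₂ ↔
      ((∀ a₁ ∈ I₁, ∃ a₂ ∈ I₂, a₁ ≤ a₂) ∧ (∀ b₂ ∈ I₂, ∃ b₁ ∈ I₁, b₁ ≤ b₂)) := by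
  constructor
  · intro ht
    constructor
    · intro a₁ ha₁
      obtain ⟨y₂, hy₂⟩ := h₂
      exact ⟨a₁ ⊔ y₂, (ht a₁ ha₁ y₂ hy₂).2, le_sup_left⟩
    · intro b₂ hb₂
      obtain ⟨y₁, hy₁⟩ := h₁
      exact ⟨y₁ ⊓ b₂, (ht y₁ hy₁ b₂ hb₂).1, inf_le_right⟩
  · rintro ⟨hA, hB⟩ y₁ hy₁ y₂ hy₂
    rcases le_total y₁ y₂ with h | h
    · rw [inf_eq_left.mpr h, sup_eq_right.mpr h]
      exact ⟨hy₁, hy₂⟩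
    · rw [inf_eq_right.mpr h, sup_eq_left.mpr h]
      obtain ⟨b₁, hb₁, hb₁le⟩ := hB y₂ hy₂
      obtain ⟨a₂, ha₂, ha₂le⟩ := hA y₁ hy₁
      exact ⟨c₁.out hb₁ hy₁ ⟨hb₁le, h⟩, c₂.out hy₂ ha₂ ⟨h, ha₂le⟩⟩
end

section
/- Let φ, ψ be decreasing surjective correspondences from a complete linear lattice M to a complete linear lattice L. Then the inverse correspondences φ⁻¹, ψ⁻¹ map L to nonempty intervals of M, are decreasing, and φ ⊑ ψ holds (pointwise) if and only if φ⁻¹ ⊑ ψ⁻¹ (pointwise). -/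
/-- The inverse correspondence. -/
def invCorr {M L : Type*} (φ : M → Set L) (y : L) : Set M := {x | y ∈ φ x}

private lemma invCorr_ordConnected {M L : Type*}
    [CompleteLinearOrder M] [CompleteLinearOrder L] (φ : M → Set L)
    (hφne : ∀ x, (φ x).Nonempty)
    (hφdec : ∀ x₁ x₂ : M, x₁ ≤ x₂ → topkis (φ x₂) (φ x₁)) (y : L) :
    (invCorr φ y).OrdConnected := by
  constructor
  intro x₁ hx₁ x₂ hx₂ x hx
  obtain ⟨z, hz⟩ := hφne x
  have h1 : y ⊔ z ∈ φ x := (hφdec x x₂ hx.2 y hx₂ z hz).2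
  have h2 : (y ⊔ z) ⊓ y ∈ φ x := (hφdec x₁ x hx.1 (y ⊔ z) h1 y hx₁).1
  have : (y ⊔ z) ⊓ y = y := inf_eq_right.mpr le_sup_left
  rwa [this] at h2

private lemma invCorr_dec {M L : Type*}
    [CompleteLinearOrder M] [CompleteLinearOrder L] (φ : M → Set L)
    (hφdec : ∀ x₁ x₂ : M, x₁ ≤ x₂ → topkis (φ x₂) (φ x₁))
    (y₁ y₂ : L) (h : y₁ ≤ y₂) : topkis (invCorr φ y₂) (invCorr φ y₁) := by
  intro x₂ hx₂ x₁ hx₁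
  rcases le_total x₂ x₁ with hle | hle
  · rw [inf_eq_left.mpr hle, sup_eq_right.mpr hle]
    exact ⟨hx₂, hx₁⟩
  · rw [inf_eq_right.mpr hle, sup_eq_left.mpr hle]
    have := hφdec x₁ x₂ hle y₂ hx₂ y₁ hx₁
    rw [inf_eq_right.mpr h, sup_eq_left.mpr h] at this
    exact ⟨this.2, this.1⟩

private lemma fwd {M L : Type*}
    [CompleteLinearOrder M] [CompleteLinearOrder L] (φ ψ : M → Set L)
    (hφne : ∀ x, (φ x).Nonempty) (hψne : ∀ x, (ψ x).Nonempty)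
    (hφdec : ∀ x₁ x₂ : M, x₁ ≤ x₂ → topkis (φ x₂) (φ x₁))
    (hψdec : ∀ x₁ x₂ : M, x₁ ≤ x₂ → topkis (ψ x₂) (ψ x₁))
    (h : ∀ x : M, topkis (φ x) (ψ x)) (y : L) :
    topkis (invCorr φ y) (invCorr ψ y) := by
  intro x₁ hx₁ x₂ hx₂
  rcases le_total x₁ x₂ with hle | hle
  · rw [inf_eq_left.mpr hle, sup_eq_right.mpr hle]
    exact ⟨hx₁, hx₂⟩
  · rw [inf_eq_right.mpr hle, sup_eq_left.mpr hle]
    constructor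
    · -- y ∈ φ x₂
      obtain ⟨a, ha⟩ := hφne x₂
      have h1 : y ⊔ a ∈ φ x₂ := (hφdec x₂ x₁ hle y hx₁ a ha).2
      have h2 : a ⊓ y ∈ φ x₂ := (h x₂ a ha y hx₂).1
      rcases le_total y a with hya | hya
      · rwa [inf_eq_right.mpr hya] at h2
      · rwa [sup_eq_left.mpr hya] at h1
    · -- y ∈ ψ x₁
      obtain ⟨a, ha⟩ := hψne x₁
      have h1 : a ⊓ y ∈ ψ x₁ := (hψdec x₂ x₁ hle a ha y hx₂).1
      have h2 : y ⊔ a ∈ ψ x₁ := (h x₁ y hx₁ a ha).2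
      rcases le_total y a with hya | hya
      · rwa [inf_eq_right.mpr hya] at h1
      · rwa [sup_eq_left.mpr hya] at h2

theorem inverse_of_decreasing_surjective {M L : Type*}
    [CompleteLinearOrder M] [CompleteLinearOrder L] (φ ψ : M → Set L)
    (hφne : ∀ x, (φ x).Nonempty) (hφc : ∀ x, (φ x).OrdConnected)
    (hψne : ∀ x, (ψ x).Nonempty) (hψc : ∀ x, (ψ x).OrdConnected)
    (hφdec : ∀ x₁ x₂ : M, x₁ ≤ x₂ → topkis (φ x₂) (φ x₁))
    (hψdec : ∀ x₁ x₂ : M, x₁ ≤ x₂ → topkis (ψ x₂) (ψ x₁))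
    (hφsurj : ∀ y : L, ∃ x, y ∈ φ x) (hψsurj : ∀ y : L, ∃ x, y ∈ ψ x) :
    (∀ y : L, (invCorr φ y).Nonempty ∧ (invCorr φ y).OrdConnected ∧
       (invCorr ψ y).Nonempty ∧ (invCorr ψ y).OrdConnected) ∧
    (∀ y₁ y₂ : L, y₁ ≤ y₂ →
       topkis (invCorr φ y₂) (invCorr φ y₁) ∧ topkis (invCorr ψ y₂) (invCorr ψ y₁)) ∧
    ((∀ x : M, topkis (φ x) (ψ x)) ↔ (∀ y : L, topkis (invCorr φ y) (invCorr ψ y))) := by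
  refine ⟨fun y => ⟨hφsurj y, invCorr_ordConnected φ hφne hφdec y,
      hψsurj y, invCorr_ordConnected ψ hψne hψdec y⟩,
    fun y₁ y₂ h => ⟨invCorr_dec φ hφdec y₁ y₂ h, invCorr_dec ψ hψdec y₁ y₂ h⟩,
    fun h => fwd φ ψ hφne hψne hφdec hψdec h,
    fun h x => ?_⟩
  exact fwd (invCorr φ) (invCorr ψ) (fun y => hφsurj y) (fun y => hψsurj y)
    (invCorr_dec φ hφdec) (invCorr_dec ψ hψdec) h x
end

section
/- Every minitive (necessity) measure μ : S → M is a lower chain measure: there exists a chain K ⊆ S containing ∅ and Ω such that μ(A) = ⋁{ μ(K) | K ∈ K, K ⊆ A } for all A ∈ S. -/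
theorem minitive_is_lower_chain_measure {Ω : Type*} {M : Type*} [CompleteLinearOrder M]
    (S : Set (Set Ω)) (hempty : ∅ ∈ S) (huniv : Set.univ ∈ S)
    (hInter : ∀ 𝒜 ⊆ S, ⋂₀ 𝒜 ∈ S)
    (μ : Set Ω → M) (hbot : μ ∅ = ⊥) (htop : μ Set.univ = ⊤)
    (hmono : ∀ A ∈ S, ∀ B ∈ S, A ⊆ B → μ A ≤ μ B)
    (hmin : ∀ 𝒜 ⊆ S, μ (⋂₀ 𝒜) = ⨅ A ∈ 𝒜, μ A) :
    ∃ K ⊆ S, ∅ ∈ K ∧ Set.univ ∈ K ∧ IsChain (· ⊆ ·) K ∧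
      ∀ A ∈ S, μ A = sSup (μ '' {B ∈ K | B ⊆ A}) := by
  set f : M → Set Ω := fun m => ⋂₀ {A ∈ S | m ≤ μ A} with hf
  have hsub : ∀ m : M, {A ∈ S | m ≤ μ A} ⊆ S := fun m A hA => hA.1
  have hfS : ∀ m, f m ∈ S := fun m => hInter _ (hsub m)
  have hfμ : ∀ m, m ≤ μ (f m) := by
    intro m
    rw [hf]
    simp only
    rw [hmin _ (hsub m)]
    exact le_iInf₂ fun A hA => hA.2
  have hfmono : ∀ m m' : M, m ≤ m' → f m ⊆ f m' := by
    intro m m' h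
    exact Set.sInter_subset_sInter fun A hA => ⟨hA.1, h.trans hA.2⟩
  have hfsub : ∀ m : M, ∀ A ∈ S, m ≤ μ A → f m ⊆ A := by
    intro m A hA h
    exact Set.sInter_subset_of_mem ⟨hA, h⟩
  refine ⟨Set.range f ∪ {Set.univ}, ?_, ?_, Or.inr rfl, ?_, ?_⟩
  · rintro B (⟨m, rfl⟩ | rfl)
    · exact hfS m
    · exact huniv
  · left
    refine ⟨⊥, ?_⟩
    exact Set.eq_empty_of_subset_empty (hfsub ⊥ ∅ hempty bot_le)
  · rintro B (⟨m, rfl⟩ | rfl) C (⟨m', rfl⟩ | rfl) _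
    · rcases le_total m m' with h | h
      · exact Or.inl (hfmono _ _ h)
      · exact Or.inr (hfmono _ _ h)
    · exact Or.inl (Set.subset_univ _)
    · exact Or.inr (Set.subset_univ _)
    · exact Or.inl (Set.subset_univ _)
  · intro A hA
    apply le_antisymm
    · apply le_sSup
      refine ⟨f (μ A), ⟨Or.inl ⟨μ A, rfl⟩, hfsub _ A hA le_rfl⟩, ?_⟩
      exact le_antisymm (hmono _ (hfS _) _ hA (hfsub _ A hA le_rfl)) (hfμ _)
    · apply sSup_le
      rintro x ⟨B, ⟨hBK, hBA⟩, rfl⟩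
      have hBS : B ∈ S := by
        rcases hBK with ⟨m, rfl⟩ | rfl
        · exact hfS m
        · exact huniv
      exact hmono B hBS A hA hBA
end
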